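/- Let ι be a finite nonempty index set and 𝒳 a type of records, and model datasets as functions D : ι → 𝒳. Let Φ be a finite nonempty output type, let q : (ι → 𝒳) → Φ → ℝ be a score function, let ε > 0 and Δq > 0, and assume |q(D, φ) − q(D′, φ)| ≤ Δq for all neighbouring datasets D, D′ and every φ ∈ Φ. For each dataset D, define the exponential mechanism as the probability mass function p_D on Φ given by p_D(φ) = exp(ε·q(D, φ)/(2·Δq)) / ∑_{ψ ∈ Φ} exp(ε·q(D, ψ)/(2·Δq)). Then the exponential mechanism satisfies ε-differential privacy: for all neighbouring datasets D, D′ and every φ ∈ Φ, p_D(φ) ≤ exp(ε)·p_{D′}(φ). -/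
import Mathlib


/-- Two datasets are neighbouring if they differ at exactly one index. -/
def Neighbouring {ι 𝒳 : Type*} (D D' : ι → 𝒳) : Prop :=
  ∃ i, D i ≠ D' i ∧ ∀ j, j ≠ i → D j = D' j

/-- The exponential mechanism: the probability of outputting `φ` on dataset `D` is
proportional to `exp (ε · q D φ / (2 · Δq))`. -/
noncomputable def expMechanism {ι 𝒳 Φ : Type*} [Fintype Φ]
    (q : (ι → 𝒳) → Φ → ℝ) (ε Δq : ℝ) (D : ι → 𝒳) (φ : Φ) : ℝ :=
  Real.exp (ε * q D φ / (2 * Δq)) / ∑ ψ : Φ, Real.exp (ε * q D ψ / (2 * Δq))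

/-- The exponential mechanism satisfies `ε`-differential privacy: if the score function
`q` has sensitivity at most `Δq` over neighbouring datasets, then for all neighbouring
`D, D'` and every output `φ`, `p_D(φ) ≤ exp ε · p_{D'}(φ)`. -/
theorem expMechanism_dp {ι 𝒳 Φ : Type*} [Fintype ι] [Nonempty ι]
    [Fintype Φ] [Nonempty Φ]
    (q : (ι → 𝒳) → Φ → ℝ) (ε Δq : ℝ) (hε : 0 < ε) (hΔq : 0 < Δq)
    (hsens : ∀ D D' : ι → 𝒳, Neighbouring D D' → ∀ φ : Φ,
      |q D φ - q D' φ| ≤ Δq) :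
    ∀ D D' : ι → 𝒳, Neighbouring D D' → ∀ φ : Φ,
      expMechanism q ε Δq D φ ≤ Real.exp ε * expMechanism q ε Δq D' φ := by

  intro D D' hN φ
  have key : ∀ (A B : ι → 𝒳), Neighbouring A B → ∀ ψ : Φ,
      Real.exp (ε * q A ψ / (2 * Δq)) ≤
        Real.exp (ε / 2) * Real.exp (ε * q B ψ / (2 * Δq)) := by
    intro A B hAB ψ
    rw [← Real.exp_add]
    apply Real.exp_le_exp.mpr
    have h := (abs_le.mp (hsens A B hAB ψ)).2
    have : ε * q A ψ / (2 * Δq) - ε * q B ψ / (2 * Δq) ≤ ε / 2 := by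
      rw [div_sub_div_same, ← mul_sub]
      rw [div_le_div_iff₀ (by positivity) (by norm_num : (0:ℝ) < 2)]
      calc ε * (q A ψ - q B ψ) * 2 ≤ ε * Δq * 2 := by
            have := mul_le_mul_of_nonneg_left h hε.le
            nlinarith
        _ = ε * (2 * Δq) := by ring
    linarith
  have hNsymm : Neighbouring D' D := by
    obtain ⟨i, hne, h⟩ := hN
    exact ⟨i, fun e => hne e.symm, fun j hj => (h j hj).symm⟩
  have Spos : ∀ A : ι → 𝒳, 0 < ∑ ψ : Φ, Real.exp (ε * q A ψ / (2 * Δq)) := by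
    intro A
    exact Finset.sum_pos (fun ψ _ => Real.exp_pos _) Finset.univ_nonempty
  have hnum := key D D' hN φ
  have hden : ∑ ψ : Φ, Real.exp (ε * q D' ψ / (2 * Δq)) ≤
      Real.exp (ε / 2) * ∑ ψ : Φ, Real.exp (ε * q D ψ / (2 * Δq)) := by
    rw [Finset.mul_sum]
    exact Finset.sum_le_sum fun ψ _ => key D' D hNsymm ψ
  unfold expMechanism
  rw [div_le_iff₀ (Spos D)]
  have h2 : Real.exp ε * Real.exp (ε * q D' φ / (2 * Δq)) /
      (∑ ψ : Φ, Real.exp (ε * q D' ψ / (2 * Δq))) *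
      (∑ ψ : Φ, Real.exp (ε * q D ψ / (2 * Δq))) ≥
      Real.exp (ε / 2) * Real.exp (ε * q D' φ / (2 * Δq)) := by
    rw [ge_iff_le, div_mul_eq_mul_div, le_div_iff₀ (Spos D')]
    calc Real.exp (ε / 2) * Real.exp (ε * q D' φ / (2 * Δq)) *
          ∑ ψ : Φ, Real.exp (ε * q D' ψ / (2 * Δq))
        ≤ Real.exp (ε / 2) * Real.exp (ε * q D' φ / (2 * Δq)) *
          (Real.exp (ε / 2) * ∑ ψ : Φ, Real.exp (ε * q D ψ / (2 * Δq))) := by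
          apply mul_le_mul_of_nonneg_left hden (by positivity)
      _ = Real.exp ε * Real.exp (ε * q D' φ / (2 * Δq)) *
          ∑ ψ : Φ, Real.exp (ε * q D ψ / (2 * Δq)) := by
          rw [show Real.exp ε = Real.exp (ε / 2) * Real.exp (ε / 2) by
            rw [← Real.exp_add]; norm_num]
          ring
  rw [mul_div_assoc] at h2
  calc Real.exp (ε * q D φ / (2 * Δq))
      ≤ Real.exp (ε / 2) * Real.exp (ε * q D' φ / (2 * Δq)) := hnum
    _ ≤ _ := h2
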